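/- Correctness of the Deflated GMRES algorithm: if x^# ∈ ℂ^N is any solution of the deflated (singular) system P A x = P b, then the vector x := Z M⁻¹ Zᴴ b + P̃ x^# solves the original system, i.e. A x = b. -/
import Mathlib


open Matrix

theorem deflated_gmres_correctness
    (N m : ℕ) (hN : 0 < N) (hm : 0 < m) (hmN : m ≤ N)
    (A : Matrix (Fin N) (Fin N) ℂ) (Z : Matrix (Fin N) (Fin m) ℂ)
    (M : Matrix (Fin m) (Fin m) ℂ) (hM : M = Zᴴ * A * Z) (hMinv : IsUnit M)
    (P Pt : Matrix (Fin N) (Fin N) ℂ)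
    (hP : P = 1 - A * Z * M⁻¹ * Zᴴ) (hPt : Pt = 1 - Z * M⁻¹ * Zᴴ * A)
    (b xsharp : Fin N → ℂ) (hxsharp : (P * A) *ᵥ xsharp = P *ᵥ b) :
    A *ᵥ ((Z * M⁻¹ * Zᴴ) *ᵥ b + Pt *ᵥ xsharp) = b := by
  have key : A * Pt = P * A := by
    rw [hP, hPt]; simp only [Matrix.mul_sub, Matrix.sub_mul, Matrix.mul_one, Matrix.one_mul, Matrix.mul_assoc]
  calc A *ᵥ ((Z * M⁻¹ * Zᴴ) *ᵥ b + Pt *ᵥ xsharp)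
      = (A * (Z * M⁻¹ * Zᴴ)) *ᵥ b + (A * Pt) *ᵥ xsharp := by
        rw [mulVec_add, mulVec_mulVec, mulVec_mulVec]
    _ = (A * (Z * M⁻¹ * Zᴴ)) *ᵥ b + P *ᵥ b := by rw [key, hxsharp]
    _ = b := by
        rw [hP, sub_mulVec, one_mulVec]
        have : A * (Z * M⁻¹ * Zᴴ) = A * Z * M⁻¹ * Zᴴ := by simp only [Matrix.mul_assoc]
        rw [this]
        abel
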